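/- Let 0 < ε < 1 and φ* ∈ (0, π/2) with φ* tan φ* = (1/2)|log ε|. Define u : [0,∞) → ℝ by u(s) = s for 0 ≤ s ≤ ε, u(s) = (√ε/cos φ*)·√s·cos((1/2)cot(φ*)·log(s/ε) − φ*) for ε < s < 1/ε, and u(s) = 1 for s ≥ 1/ε. Then u is continuously differentiable on (0,∞), with u(ε)=ε, u'(ε)=1, u(1/ε)=1 and u'(1/ε)=0. -/

import Mathlib

open Real Set

private lemma aux_hasDerivAt (A c φ ε : ℝ) (hε : 0 < ε) {s : ℝ} (hs : 0 < s) :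
    HasDerivAt (fun t => A * Real.sqrt t * Real.cos (c * Real.log (t / ε) - φ))
      (A / Real.sqrt s * ((1 / 2) * Real.cos (c * Real.log (s / ε) - φ)
        - c * Real.sin (c * Real.log (s / ε) - φ))) s := by
  have hs0 : s ≠ 0 := hs.ne'
  have hsq : (0:ℝ) < Real.sqrt s := Real.sqrt_pos.mpr hs
  have h1 : HasDerivAt (fun t : ℝ => t / ε) (1 / ε) s := by
    simpa using (hasDerivAt_id s).div_const ε
  have h2 : HasDerivAt (fun t : ℝ => Real.log (t / ε)) ((s / ε)⁻¹ * (1 / ε)) s :=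
    (Real.hasDerivAt_log (by positivity)).comp s h1
  have h3 : HasDerivAt (fun t => c * Real.log (t / ε) - φ) (c * ((s / ε)⁻¹ * (1 / ε))) s :=
    (h2.const_mul c).sub_const φ
  have h4 := h3.cos
  have h5 := (Real.hasDerivAt_sqrt hs0).const_mul A
  have h6 := h5.mul h4
  refine h6.congr_deriv ?_
  have hss : Real.sqrt s * Real.sqrt s = s := Real.mul_self_sqrt hs.le
  rw [show (s / ε)⁻¹ * (1 / ε) = 1 / s by field_simp]
  field_simp
  linear_combination (-2 * A * c * Real.sin (c * Real.log (s / ε) - φ)) * hss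

theorem maximizer_smoothness (ε : ℝ) (hε0 : 0 < ε) (hε1 : ε < 1)
    (φ : ℝ) (hφ : φ ∈ Ioo 0 (π / 2)) (heq : φ * Real.tan φ = (1 / 2) * |Real.log ε|)
    (u : ℝ → ℝ)
    (hu : u = fun s : ℝ =>
      if s ≤ ε then s
      else if s < 1 / ε then
        (Real.sqrt ε / Real.cos φ) * Real.sqrt s *
          Real.cos ((1 / 2) * (Real.cos φ / Real.sin φ) * Real.log (s / ε) - φ)
      else 1) :
    ContDiffOn ℝ 1 u (Ioi 0) ∧ u ε = ε ∧ HasDerivAt u 1 ε ∧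
      u (1 / ε) = 1 ∧ HasDerivAt u 0 (1 / ε) := by
  obtain ⟨hφ0, hφ2⟩ := hφ
  have hsin : 0 < Real.sin φ := Real.sin_pos_of_pos_of_lt_pi hφ0 (by linarith [Real.pi_pos])
  have hcos : 0 < Real.cos φ := Real.cos_pos_of_mem_Ioo ⟨by linarith, hφ2⟩
  have hlog : Real.log ε < 0 := Real.log_neg hε0 hε1
  have habs : |Real.log ε| = -Real.log ε := abs_of_neg hlog
  have hεinv : 1 < 1 / ε := by rw [lt_div_iff₀ hε0]; linarith
  have hεlt : ε < 1 / ε := lt_trans hε1 hεinv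
  have hinv0 : 0 < 1 / ε := by positivity
  have hsqε : (0:ℝ) < Real.sqrt ε := Real.sqrt_pos.mpr hε0
  have hεss : Real.sqrt ε * Real.sqrt ε = ε := Real.mul_self_sqrt hε0.le
  set c : ℝ := (1 / 2) * (Real.cos φ / Real.sin φ) with hc
  set A : ℝ := Real.sqrt ε / Real.cos φ with hA
  set f : ℝ → ℝ := fun s => A * Real.sqrt s * Real.cos (c * Real.log (s / ε) - φ) with hf
  set G : ℝ → ℝ := fun s => A / Real.sqrt s * ((1 / 2) * Real.cos (c * Real.log (s / ε) - φ)
        - c * Real.sin (c * Real.log (s / ε) - φ)) with hG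
  set g : ℝ → ℝ := fun s => if s ≤ ε then 1 else if s < 1 / ε then G s else 0 with hg
  have hu' : u = fun s : ℝ => if s ≤ ε then s else if s < 1 / ε then f s else 1 := hu
  clear hu
  -- values at the matching points
  have htan : Real.tan φ = Real.sin φ / Real.cos φ := Real.tan_eq_sin_div_cos φ
  have hlogval : -Real.log ε = 2 * φ * (Real.sin φ / Real.cos φ) := by
    rw [habs, htan] at heq; linarith
  have hlogεε : Real.log (ε / ε) = 0 := by rw [div_self hε0.ne']; exact Real.log_one
  have hθε : c * Real.log (ε / ε) - φ = -φ := by rw [hlogεε]; ring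
  have hlog1 : Real.log ((1 / ε) / ε) = -(2 * Real.log ε) := by
    rw [Real.log_div (by positivity) hε0.ne', Real.log_div one_ne_zero hε0.ne', Real.log_one]
    ring
  have hθ1 : c * Real.log ((1 / ε) / ε) - φ = φ := by
    rw [hlog1, hc]
    have h2 : -(2 * Real.log ε) = 2 * (2 * φ * (Real.sin φ / Real.cos φ)) := by linarith
    rw [h2]
    field_simp
    ring
  have hcsin : c * Real.sin φ = (1 / 2) * Real.cos φ := by
    rw [hc]; field_simp
  have hfε : f ε = ε := by
    simp only [hf, hθε, Real.cos_neg, hA]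
    field_simp
    exact Real.sq_sqrt hε0.le
  have hGε : G ε = 1 := by
    simp only [hG, hθε, Real.cos_neg, Real.sin_neg, hA]
    field_simp
    linear_combination 2 * hcsin
  have hsqinv : Real.sqrt (1 / ε) = 1 / Real.sqrt ε := by
    rw [one_div, one_div, Real.sqrt_inv]
  have hf1 : f (1 / ε) = 1 := by
    simp only [hf, hθ1, hsqinv, hA]
    field_simp
  have hG1 : G (1 / ε) = 0 := by
    simp only [hG, hθ1]
    rw [hcsin]; ring
  -- derivative of f at every positive point
  have hfd : ∀ {s : ℝ}, 0 < s → HasDerivAt f (G s) s := fun hs =>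
    aux_hasDerivAt A c φ ε hε0 hs
  -- piecewise descriptions
  have hu_left : ∀ s, s ≤ ε → u s = s := by
    intro s hs; simp only [hu']; rw [if_pos hs]
  have hu_mid : ∀ s, ε ≤ s → s < 1 / ε → u s = f s := by
    intro s hs hs'; simp only [hu']
    rcases eq_or_lt_of_le hs with h | h
    · rw [if_pos h.ge, ← h, hfε]
    · rw [if_neg (not_le.mpr h), if_pos hs']
  have hu_right : ∀ s, 1 / ε ≤ s → u s = 1 := by
    intro s hs; simp only [hu']
    rw [if_neg (not_le.mpr (lt_of_lt_of_le hεlt hs)), if_neg (not_lt.mpr hs)]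
  have hg_left : ∀ s, s ≤ ε → g s = 1 := by
    intro s hs; simp only [hg]; rw [if_pos hs]
  have hg_mid : ∀ s, ε ≤ s → s < 1 / ε → g s = G s := by
    intro s hs hs'; simp only [hg]
    rcases eq_or_lt_of_le hs with h | h
    · rw [if_pos h.ge, ← h, hGε]
    · rw [if_neg (not_le.mpr h), if_pos hs']
  have hg_right : ∀ s, 1 / ε ≤ s → g s = 0 := by
    intro s hs; simp only [hg]
    rw [if_neg (not_le.mpr (lt_of_lt_of_le hεlt hs)), if_neg (not_lt.mpr hs)]
  have hux1 : u (1 / ε) = f (1 / ε) := by rw [hu_right _ le_rfl, hf1]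
  have hgx1 : g (1 / ε) = G (1 / ε) := by rw [hg_right _ le_rfl, hG1]
  -- key: derivative everywhere on Ioi 0
  have key : ∀ s ∈ Ioi (0:ℝ), HasDerivAt u (g s) s := by
    intro s hs
    simp only [mem_Ioi] at hs
    rcases lt_trichotomy s ε with h | rfl | h
    · rw [hg_left s h.le]
      refine (hasDerivAt_id s).congr_of_eventuallyEq ?_
      filter_upwards [Iio_mem_nhds h] with t ht
      exact hu_left t (le_of_lt ht)
    · rw [hg_left s le_rfl]
      have hL : HasDerivWithinAt u 1 (Iic s) s := by
        refine ((hasDerivAt_id s).hasDerivWithinAt).congr_of_eventuallyEq ?_ (hu_left s le_rfl)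
        filter_upwards [self_mem_nhdsWithin] with t ht
        exact hu_left t ht
      have hR : HasDerivWithinAt u 1 (Ici s) s := by
        have h1 : HasDerivWithinAt f 1 (Ici s) s := by
          have h0 : HasDerivWithinAt f (G s) (Ici s) s := (hfd hs).hasDerivWithinAt
          rwa [hGε] at h0
        refine h1.congr_of_eventuallyEq ?_ (hu_mid s le_rfl hεlt)
        filter_upwards [self_mem_nhdsWithin,
          nhdsWithin_le_nhds (Iio_mem_nhds hεlt)] with t ht ht'
        exact hu_mid t ht ht'
      have h2 := hL.union hR
      rw [Iic_union_Ici, hasDerivWithinAt_univ] at h2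
      exact h2
    · rcases lt_trichotomy s (1 / ε) with h' | rfl | h'
      · rw [hg_mid s h.le h']
        refine (hfd hs).congr_of_eventuallyEq ?_
        filter_upwards [Ioi_mem_nhds h, Iio_mem_nhds h'] with t ht ht'
        exact hu_mid t (le_of_lt ht) ht'
      · rw [hg_right _ le_rfl]
        have hL : HasDerivWithinAt u 0 (Iic (1 / ε)) (1 / ε) := by
          have h1 : HasDerivWithinAt f 0 (Iic (1 / ε)) (1 / ε) := by
            have h0 : HasDerivWithinAt f (G (1 / ε)) (Iic (1 / ε)) (1 / ε) :=
              (hfd hinv0).hasDerivWithinAt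
            rwa [hG1] at h0
          refine h1.congr_of_eventuallyEq ?_ hux1
          filter_upwards [self_mem_nhdsWithin,
            nhdsWithin_le_nhds (Ioi_mem_nhds hεlt)] with t ht ht'
          rcases lt_or_eq_of_le (show t ≤ 1 / ε from ht) with h2 | h2
          · exact hu_mid t (le_of_lt ht') h2
          · rw [h2]; exact hux1
        have hR : HasDerivWithinAt u 0 (Ici (1 / ε)) (1 / ε) := by
          refine (hasDerivWithinAt_const (1 / ε) _ (1:ℝ)).congr_of_eventuallyEq ?_
            (hu_right _ le_rfl)
          filter_upwards [self_mem_nhdsWithin] with t ht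
          exact hu_right t ht
        have h2 := hL.union hR
        rw [Iic_union_Ici, hasDerivWithinAt_univ] at h2
        exact h2
      · rw [hg_right s h'.le]
        refine (hasDerivAt_const s (1:ℝ)).congr_of_eventuallyEq ?_
        filter_upwards [Ioi_mem_nhds h'] with t ht
        exact hu_right t (le_of_lt ht)
  -- continuity of G on positive reals
  have hGc : ∀ s : ℝ, 0 < s → ContinuousAt G s := by
    intro s hs
    have h1 : ContinuousAt (fun t : ℝ => Real.log (t / ε)) s :=
      (Real.continuousAt_log (by positivity)).comp (continuousAt_id.div_const ε)
    have h2 : ContinuousAt (fun t : ℝ => c * Real.log (t / ε) - φ) s :=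
      (h1.const_mul c).sub continuousAt_const
    exact (continuousAt_const.div Real.continuous_sqrt.continuousAt
        (Real.sqrt_pos.mpr hs).ne').mul
      (((Real.continuous_cos.continuousAt.comp h2).const_mul (1/2)).sub
        ((Real.continuous_sin.continuousAt.comp h2).const_mul c))
  -- continuity of g on Ioi 0
  have hgc : ContinuousOn g (Ioi 0) := by
    intro s hs
    simp only [mem_Ioi] at hs
    apply ContinuousAt.continuousWithinAt
    rcases lt_trichotomy s ε with h | rfl | h
    · refine ContinuousAt.congr_of_eventuallyEq (f := fun _ => (1:ℝ)) continuousAt_const ?_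
      filter_upwards [Iio_mem_nhds h] with t ht
      exact hg_left t (le_of_lt ht)
    · have hL : ContinuousWithinAt g (Iic s) s := by
        refine (continuousWithinAt_const (b := (1:ℝ))).congr_of_eventuallyEq ?_
          (hg_left s le_rfl)
        filter_upwards [self_mem_nhdsWithin] with t ht
        exact hg_left t ht
      have hR : ContinuousWithinAt g (Ici s) s := by
        refine ((hGc s hs).continuousWithinAt).congr_of_eventuallyEq ?_
          (by rw [hg_left s le_rfl, hGε])
        filter_upwards [self_mem_nhdsWithin,
          nhdsWithin_le_nhds (Iio_mem_nhds hεlt)] with t ht ht'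
        exact hg_mid t ht ht'
      have h2 := hL.union hR
      rwa [Iic_union_Ici, continuousWithinAt_univ] at h2
    · rcases lt_trichotomy s (1 / ε) with h' | rfl | h'
      · refine (hGc s hs).congr_of_eventuallyEq ?_
        filter_upwards [Ioi_mem_nhds h, Iio_mem_nhds h'] with t ht ht'
        exact hg_mid t (le_of_lt ht) ht'
      · have hL : ContinuousWithinAt g (Iic (1 / ε)) (1 / ε) := by
          refine ((hGc _ hinv0).continuousWithinAt).congr_of_eventuallyEq ?_ hgx1
          filter_upwards [self_mem_nhdsWithin,
            nhdsWithin_le_nhds (Ioi_mem_nhds hεlt)] with t ht ht'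
          rcases lt_or_eq_of_le (show t ≤ 1 / ε from ht) with h2 | h2
          · exact hg_mid t (le_of_lt ht') h2
          · rw [h2]; exact hgx1
        have hR : ContinuousWithinAt g (Ici (1 / ε)) (1 / ε) := by
          refine (continuousWithinAt_const (b := (0:ℝ))).congr_of_eventuallyEq ?_
            (hg_right _ le_rfl)
          filter_upwards [self_mem_nhdsWithin] with t ht
          exact hg_right t ht
        have h2 := hL.union hR
        rwa [Iic_union_Ici, continuousWithinAt_univ] at h2
      · refine ContinuousAt.congr_of_eventuallyEq (f := fun _ => (0:ℝ)) continuousAt_const ?_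
        filter_upwards [Ioi_mem_nhds h'] with t ht
        exact hg_right t (le_of_lt ht)
  -- assemble
  have hcd : ContDiffOn ℝ 1 u (Ioi 0) := by
    rw [← zero_add (1 : WithTop ℕ∞), contDiffOn_succ_iff_deriv_of_isOpen isOpen_Ioi]
    refine ⟨fun s hs => (key s hs).differentiableAt.differentiableWithinAt,
      by intro h; simp at h, ?_⟩
    rw [contDiffOn_zero]
    exact hgc.congr fun s hs => (key s hs).deriv
  have hder_ε : HasDerivAt u 1 ε := by
    have h2 := key ε (mem_Ioi.mpr hε0)
    rwa [hg_left ε le_rfl] at h2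
  have hder_1 : HasDerivAt u 0 (1 / ε) := by
    have h2 := key (1 / ε) (mem_Ioi.mpr hinv0)
    rwa [hg_right (1 / ε) le_rfl] at h2
  exact ⟨hcd, hu_left ε le_rfl, hder_ε, hu_right (1 / ε) le_rfl, hder_1⟩
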